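/- Given that the Schur multiplier norm on ℓ_p-unit balls of each matrix T^{u,v} (indicator of i_u ≤ i_v) is at most a constant c₃ = c₃(p) for 1 ≤ p < 2, there exists a constant c₂ = c₂(p) ≥ 1 such that for every m-homogeneous polynomial P : ℂⁿ → ℂ, sup_{‖x⁽ᵏ⁾‖_p ≤ 1} |L_P(x⁽¹⁾,...,x⁽ᵐ⁾)| ≤ c₂^{m²} · sup_{‖x‖_p ≤ 1} |P(x)|, with the constant independent of the dimension n. -/

import Mathlib

/-- The `ℓ_p` norm of a vector in `ℂⁿ`. -/
noncomputable def pNorm (n : ℕ) (p : ℝ) (v : Fin n → ℂ) : ℝ :=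
  (∑ j : Fin n, ‖v j‖ ^ p) ^ (1 / p)

/-- The (non-symmetric) `m`-form associated to a coefficient array `c`
(supported on nondecreasing multi-indices). -/
noncomputable def LP (n m : ℕ) (c : (Fin m → Fin n) → ℂ) : (Fin m → (Fin n → ℂ)) → ℂ :=
  fun x => ∑ j : Fin m → Fin n, c j * ∏ k : Fin m, x k (j k)

namespace BHAux

variable {n m : ℕ} {p : ℝ}

lemma pNorm_zero (hp : 0 < p) : pNorm n p (fun _ => 0) = 0 := by
  simp only [pNorm, norm_zero, Real.zero_rpow hp.ne', Finset.sum_const, smul_zero]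
  rw [Real.zero_rpow (by positivity : 1/p ≠ 0)]

lemma sum_rpow_le_one (hp1 : 1 ≤ p) {v : Fin n → ℂ} (hv : pNorm n p v ≤ 1) :
    ∑ j : Fin n, ‖v j‖ ^ p ≤ 1 := by
  have hp0 : 0 < p := lt_of_lt_of_le one_pos hp1
  have hs : (0:ℝ) ≤ ∑ j : Fin n, ‖v j‖ ^ p :=
    Finset.sum_nonneg fun j _ => Real.rpow_nonneg (norm_nonneg _) _
  have := Real.rpow_le_rpow (Real.rpow_nonneg hs _) hv hp0.le
  rwa [← Real.rpow_mul hs, one_div, inv_mul_cancel₀ hp0.ne', Real.rpow_one,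
    Real.one_rpow] at this

lemma coord_le_one (hp1 : 1 ≤ p) {v : Fin n → ℂ} (hv : pNorm n p v ≤ 1) (i : Fin n) :
    ‖v i‖ ≤ 1 := by
  have hp0 : 0 < p := lt_of_lt_of_le one_pos hp1
  have h1 : ‖v i‖ ^ p ≤ 1 :=
    le_trans (Finset.single_le_sum (f := fun j => ‖v j‖ ^ p)
      (fun j _ => Real.rpow_nonneg (norm_nonneg _) _) (Finset.mem_univ i))
      (sum_rpow_le_one hp1 hv)
  by_contra hlt
  push_neg at hlt
  have : (1:ℝ) < ‖v i‖ ^ p := by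
    have := Real.rpow_lt_rpow (by norm_num) hlt hp0
    rwa [Real.one_rpow] at this
  linarith

lemma LP_le_sum_norm {c : (Fin m → Fin n) → ℂ} {x : Fin m → (Fin n → ℂ)}
    (hx : ∀ u i, ‖x u i‖ ≤ 1) : ‖LP n m c x‖ ≤ ∑ j : Fin m → Fin n, ‖c j‖ := by
  refine le_trans (norm_sum_le _ _) (Finset.sum_le_sum fun j _ => ?_)
  rw [norm_mul]
  have h1 : ‖∏ k : Fin m, x k (j k)‖ ≤ 1 := by
    rw [norm_prod]
    exact Finset.prod_le_one (fun k _ => norm_nonneg _) (fun k _ => hx k (j k))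
  calc ‖c j‖ * ‖∏ k : Fin m, x k (j k)‖ ≤ ‖c j‖ * 1 :=
        mul_le_mul_of_nonneg_left h1 (norm_nonneg _)
    _ = ‖c j‖ := mul_one _

/-- sup of the m-linear form over the product of unit balls. -/
noncomputable def S (p : ℝ) (n m : ℕ) (c : (Fin m → Fin n) → ℂ) : ℝ :=
  ⨆ x : {x : Fin m → (Fin n → ℂ) // ∀ u, pNorm n p (x u) ≤ 1}, ‖LP n m c x.1‖

theorem ballNonempty (hp : 0 < p) : Nonempty {x : Fin m → (Fin n → ℂ) // ∀ u, pNorm n p (x u) ≤ 1} :=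
  ⟨⟨fun _ _ => 0, fun _ => by rw [pNorm_zero hp]; norm_num⟩⟩

lemma bddAbove_S (hp1 : 1 ≤ p) (c : (Fin m → Fin n) → ℂ) :
    BddAbove (Set.range fun x : {x : Fin m → (Fin n → ℂ) // ∀ u, pNorm n p (x u) ≤ 1} =>
      ‖LP n m c x.1‖) := by
  refine ⟨∑ j : Fin m → Fin n, ‖c j‖, ?_⟩
  rintro r ⟨x, rfl⟩
  exact LP_le_sum_norm fun u i => coord_le_one hp1 (x.2 u) i

lemma le_S (hp1 : 1 ≤ p) {c : (Fin m → Fin n) → ℂ} {x : Fin m → (Fin n → ℂ)}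
    (hx : ∀ u, pNorm n p (x u) ≤ 1) : ‖LP n m c x‖ ≤ S p n m c :=
  le_ciSup (bddAbove_S hp1 c) ⟨x, hx⟩

lemma S_le (hp1 : 1 ≤ p) {c : (Fin m → Fin n) → ℂ} {a : ℝ}
    (h : ∀ x : Fin m → (Fin n → ℂ), (∀ u, pNorm n p (x u) ≤ 1) → ‖LP n m c x‖ ≤ a) :
    S p n m c ≤ a := by
  have : Nonempty {x : Fin m → (Fin n → ℂ) // ∀ u, pNorm n p (x u) ≤ 1} :=
    ballNonempty (lt_of_lt_of_le one_pos hp1)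
  exact ciSup_le fun x => h x.1 x.2

lemma S_nonneg (hp1 : 1 ≤ p) (c : (Fin m → Fin n) → ℂ) : 0 ≤ S p n m c :=
  le_trans (norm_nonneg _) (le_S hp1 (fun _u => by rw [pNorm_zero (lt_of_lt_of_le one_pos hp1)]; norm_num))




lemma LP_split (u v : Fin m) (huv : u ≠ v) (c : (Fin m → Fin n) → ℂ)
    (x : Fin m → (Fin n → ℂ)) :
    LP n m c x = ∑ i : Fin n, ∑ k : Fin n,
      (∑ j ∈ Finset.univ.filter (fun j : Fin m → Fin n => (j u, j v) = (i, k)),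
        c j * ∏ w ∈ (Finset.univ.erase u).erase v, x w (j w)) * x u i * x v k := by
  have hvmem : v ∈ Finset.univ.erase u := Finset.mem_erase.mpr ⟨huv.symm, Finset.mem_univ v⟩
  have hprod : ∀ j : Fin m → Fin n, (∏ k : Fin m, x k (j k)) =
      x u (j u) * (x v (j v) * ∏ w ∈ (Finset.univ.erase u).erase v, x w (j w)) := by
    intro j
    rw [← Finset.mul_prod_erase Finset.univ (fun w => x w (j w)) (Finset.mem_univ u),
      ← Finset.mul_prod_erase (Finset.univ.erase u) (fun w => x w (j w)) hvmem]
  have := Finset.sum_fiberwise (Finset.univ : Finset (Fin m → Fin n))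
      (fun j => (j u, j v))
      (fun j => c j * ∏ k : Fin m, x k (j k))
  rw [LP, ← this, Fintype.sum_prod_type]
  refine Finset.sum_congr rfl fun i _ => Finset.sum_congr rfl fun k _ => ?_
  rw [Finset.sum_mul, Finset.sum_mul]
  refine Finset.sum_congr rfl fun j hj => ?_
  have hj' := (Finset.mem_filter.mp hj).2
  have hju : j u = i := by exact congrArg Prod.fst hj'
  have hjv : j v = k := by exact congrArg Prod.snd hj'
  rw [hprod j, hju, hjv]; ring


open Finset in
lemma schur_step (hp1 : 1 ≤ p) {c₃ : ℝ} (hc₃ : 0 ≤ c₃)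
    (hB : ∀ (a : Fin n → Fin n → ℂ) (x y : Fin n → ℂ),
      pNorm n p x ≤ 1 → pNorm n p y ≤ 1 →
      ‖∑ i : Fin n, ∑ j : Fin n, (if i ≤ j then a i j else 0) * y i * x j‖ ≤
        c₃ * ⨆ q : {q : (Fin n → ℂ) × (Fin n → ℂ) //
            pNorm n p q.1 ≤ 1 ∧ pNorm n p q.2 ≤ 1},
          ‖∑ i : Fin n, ∑ j : Fin n, a i j * q.1.2 i * q.1.1 j‖)
    (u v : Fin m) (huv : u ≠ v) (c : (Fin m → Fin n) → ℂ) :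
    S p n m (fun j => if j u ≤ j v then c j else 0) ≤ c₃ * S p n m c := by
  have hp0 : 0 < p := lt_of_lt_of_le one_pos hp1
  refine S_le hp1 fun x hx => ?_
  set a : Fin n → Fin n → ℂ := fun i k =>
    ∑ j ∈ Finset.univ.filter (fun j : Fin m → Fin n => (j u, j v) = (i, k)),
      c j * ∏ w ∈ (Finset.univ.erase u).erase v, x w (j w) with ha
  -- rewrite LHS
  have hL : LP n m (fun j => if j u ≤ j v then c j else 0) x =
      ∑ i : Fin n, ∑ k : Fin n, (if i ≤ k then a i k else 0) * x u i * x v k := by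
    rw [LP_split u v huv _ x]
    refine Finset.sum_congr rfl fun i _ => Finset.sum_congr rfl fun k _ => ?_
    congr 2
    by_cases hik : i ≤ k
    · rw [if_pos hik, ha]
      refine Finset.sum_congr rfl fun j hj => ?_
      have hj' := (Finset.mem_filter.mp hj).2
      have hju : j u = i := congrArg Prod.fst hj'
      have hjv : j v = k := congrArg Prod.snd hj'
      rw [if_pos (by rw [hju, hjv]; exact hik)]
    · rw [if_neg hik]
      refine Finset.sum_eq_zero fun j hj => ?_
      have hj' := (Finset.mem_filter.mp hj).2
      have hju : j u = i := congrArg Prod.fst hj'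
      have hjv : j v = k := congrArg Prod.snd hj'
      rw [if_neg (by rw [hju, hjv]; exact hik), zero_mul]
  rw [hL]
  refine le_trans (hB a (x v) (x u) (hx v) (hx u)) ?_
  refine mul_le_mul_of_nonneg_left ?_ hc₃
  -- sup over q is at most S p n m c
  have : Nonempty {q : (Fin n → ℂ) × (Fin n → ℂ) //
      pNorm n p q.1 ≤ 1 ∧ pNorm n p q.2 ≤ 1} :=
    ⟨⟨(fun _ => 0, fun _ => 0), by
      constructor <;> · show pNorm n p (fun _ => 0) ≤ 1; rw [pNorm_zero hp0]; norm_num⟩⟩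
  refine ciSup_le fun q => ?_
  set x' : Fin m → (Fin n → ℂ) :=
    Function.update (Function.update x u q.1.2) v q.1.1 with hx'
  have hx'u : x' u = q.1.2 := by
    rw [hx', Function.update_of_ne huv, Function.update_self]
  have hx'v : x' v = q.1.1 := by rw [hx', Function.update_self]
  have hx'w : ∀ w, w ≠ u → w ≠ v → x' w = x w := by
    intro w hwu hwv
    rw [hx', Function.update_of_ne hwv, Function.update_of_ne hwu]
  have hval : (∑ i : Fin n, ∑ k : Fin n, a i k * q.1.2 i * q.1.1 k) = LP n m c x' := by
    rw [LP_split u v huv c x']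
    refine Finset.sum_congr rfl fun i _ => Finset.sum_congr rfl fun k _ => ?_
    rw [hx'u, hx'v]
    congr 1; congr 1
    refine Finset.sum_congr rfl fun j hj => ?_
    congr 1
    refine Finset.prod_congr rfl fun w hw => ?_
    have hw' := Finset.mem_erase.mp hw
    have hw'' := Finset.mem_erase.mp hw'.2
    rw [hx'w w hw''.1 hw'.1]
  rw [hval]
  refine le_S hp1 fun w => ?_
  by_cases hwv : w = v
  · rw [hwv, hx'v]; exact q.2.1
  by_cases hwu : w = u
  · rw [hwu, hx'u]; exact q.2.2
  · rw [hx'w w hwu hwv]; exact hx w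

/-- multiply coefficients by the product of triangle indicators given by a list of pairs -/
def mulInd (L : List (Fin m × Fin m)) (c : (Fin m → Fin n) → ℂ) : (Fin m → Fin n) → ℂ :=
  fun j => if ∀ e ∈ L, j e.1 ≤ j e.2 then c j else 0

lemma mulInd_nil (c : (Fin m → Fin n) → ℂ) : mulInd [] c = c := by
  funext j; simp [mulInd]

lemma mulInd_cons (e : Fin m × Fin m) (L : List (Fin m × Fin m)) (c : (Fin m → Fin n) → ℂ) :
    mulInd (e :: L) c = fun j => if j e.1 ≤ j e.2 then mulInd L c j else 0 := by
  funext j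
  simp only [mulInd, List.forall_mem_cons]
  by_cases h1 : j e.1 ≤ j e.2
  · by_cases h2 : ∀ e' ∈ L, j e'.1 ≤ j e'.2
    · rw [if_pos ⟨h1, h2⟩, if_pos h1, if_pos h2]
    · rw [if_neg (by tauto), if_pos h1, if_neg h2]
  · rw [if_neg (by tauto), if_neg h1]

lemma schur_iter (hp1 : 1 ≤ p) {c₃ : ℝ} (hc₃ : 1 ≤ c₃)
    (hB : ∀ (a : Fin n → Fin n → ℂ) (x y : Fin n → ℂ),
      pNorm n p x ≤ 1 → pNorm n p y ≤ 1 →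
      ‖∑ i : Fin n, ∑ j : Fin n, (if i ≤ j then a i j else 0) * y i * x j‖ ≤
        c₃ * ⨆ q : {q : (Fin n → ℂ) × (Fin n → ℂ) //
            pNorm n p q.1 ≤ 1 ∧ pNorm n p q.2 ≤ 1},
          ‖∑ i : Fin n, ∑ j : Fin n, a i j * q.1.2 i * q.1.1 j‖)
    (L : List (Fin m × Fin m)) (hL : ∀ e ∈ L, e.1 ≠ e.2) (c : (Fin m → Fin n) → ℂ) :
    S p n m (mulInd L c) ≤ c₃ ^ L.length * S p n m c := by
  induction L with
  | nil => rw [mulInd_nil]; simp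
  | cons e L ih =>
    have h1 : S p n m (mulInd (e :: L) c) ≤ c₃ * S p n m (mulInd L c) := by
      rw [mulInd_cons]
      exact schur_step hp1 (le_trans zero_le_one hc₃) hB e.1 e.2
        (hL e List.mem_cons_self) (mulInd L c)
    refine le_trans h1 ?_
    rw [List.length_cons, pow_succ, mul_comm (c₃ ^ L.length) c₃, mul_assoc]
    exact mul_le_mul_of_nonneg_left
      (ih fun e' he' => hL e' (List.mem_cons_of_mem e he')) (le_trans zero_le_one hc₃)


lemma LP_sum {ι : Type*} (t : Finset ι) (g : ι → (Fin m → Fin n) → ℂ)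
    (x : Fin m → (Fin n → ℂ)) :
    LP n m (fun j => ∑ F ∈ t, g F j) x = ∑ F ∈ t, LP n m (g F) x := by
  simp only [LP, Finset.sum_mul]
  rw [Finset.sum_comm]

lemma LP_smul (a : ℂ) (c : (Fin m → Fin n) → ℂ) (x : Fin m → (Fin n → ℂ)) :
    LP n m (fun j => a * c j) x = a * LP n m c x := by
  simp only [LP, Finset.mul_sum, mul_assoc]

lemma LP_homog (c : (Fin m → Fin n) → ℂ) (t : ℂ) (y : Fin n → ℂ) :
    LP n m c (fun _ => fun i => t * y i) = t ^ m * LP n m c (fun _ => y) := by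
  simp only [LP, Finset.mul_sum]
  refine Finset.sum_congr rfl fun j _ => ?_
  rw [Finset.prod_mul_distrib, Finset.prod_const, Finset.card_univ, Fintype.card_fin]
  ring

lemma LP_comp_perm {c : (Fin m → Fin n) → ℂ}
    (hc : ∀ (σ : Equiv.Perm (Fin m)) (j : Fin m → Fin n), c (j ∘ σ) = c j)
    (σ : Equiv.Perm (Fin m)) (x : Fin m → (Fin n → ℂ)) :
    LP n m c (x ∘ σ) = LP n m c x := by
  have h1 : ∀ j : Fin m → Fin n, (∏ u : Fin m, x (σ u) (j u)) =
      ∏ u : Fin m, x u (j (σ.symm u)) := by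
    intro j
    have := Equiv.prod_comp σ (fun u => x u (j (σ.symm u)))
    simp only [Equiv.symm_apply_apply] at this
    exact this
  calc LP n m c (x ∘ σ) = ∑ j : Fin m → Fin n, c j * ∏ u : Fin m, x u (j (σ.symm u)) := by
        simp only [LP, Function.comp_apply]
        exact Finset.sum_congr rfl fun j _ => by rw [h1]
    _ = LP n m c x := by
        rw [LP]
        refine Fintype.sum_equiv (Equiv.arrowCongr σ (Equiv.refl (Fin n)))
          _ _ fun j => ?_
        have he : (Equiv.arrowCongr σ (Equiv.refl (Fin n))) j = j ∘ ⇑σ.symm := rfl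
        rw [he, hc σ.symm j]
        rfl

-- pNorm lemmas
lemma pNorm_nonneg (v : Fin n → ℂ) : 0 ≤ pNorm n p v :=
  Real.rpow_nonneg (Finset.sum_nonneg fun j _ => Real.rpow_nonneg (norm_nonneg _) _) _

lemma pNorm_smul (hp : 0 < p) (t : ℂ) (v : Fin n → ℂ) :
    pNorm n p (fun i => t * v i) = ‖t‖ * pNorm n p v := by
  simp only [pNorm, norm_mul]
  have h1 : ∀ i : Fin n, ‖t‖ ^ p * ‖v i‖ ^ p = (‖t‖ * ‖v i‖) ^ p := fun i =>
    (Real.mul_rpow (norm_nonneg t) (norm_nonneg (v i))).symm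
  rw [show (∑ j : Fin n, (‖t‖ * ‖v j‖) ^ p) = ‖t‖ ^ p * ∑ j : Fin n, ‖v j‖ ^ p by
    rw [Finset.mul_sum]; exact Finset.sum_congr rfl fun j _ => (h1 j).symm]
  rw [Real.mul_rpow (Real.rpow_nonneg (norm_nonneg t) p)
    (Finset.sum_nonneg fun j _ => Real.rpow_nonneg (norm_nonneg _) _),
    ← Real.rpow_mul (norm_nonneg t), mul_one_div, div_self hp.ne', Real.rpow_one]

lemma pNorm_add_le (hp1 : 1 ≤ p) (v w : Fin n → ℂ) :
    pNorm n p (fun i => v i + w i) ≤ pNorm n p v + pNorm n p w := by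
  have key := Real.Lp_add_le Finset.univ (fun i => ‖v i‖) (fun i => ‖w i‖) hp1
  simp only [abs_of_nonneg (norm_nonneg _), abs_of_nonneg
    (add_nonneg (norm_nonneg _) (norm_nonneg _))] at key
  refine le_trans ?_ key
  rw [pNorm]
  refine Real.rpow_le_rpow (Finset.sum_nonneg fun j _ => Real.rpow_nonneg (norm_nonneg _) _)
    (Finset.sum_le_sum fun i _ => ?_) (by positivity)
  refine Real.rpow_le_rpow (norm_nonneg _) (norm_add_le _ _) (by positivity)

lemma pNorm_sum_le (hp1 : 1 ≤ p) {ι : Type*} (t : Finset ι) (f : ι → (Fin n → ℂ)) :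
    pNorm n p (fun i => ∑ k ∈ t, f k i) ≤ ∑ k ∈ t, pNorm n p (f k) := by
  classical
  induction t using Finset.induction_on with
  | empty =>
    simp only [Finset.sum_empty]
    rw [pNorm_zero (lt_of_lt_of_le one_pos hp1)]
  | insert a s hx ih =>
    simp only [Finset.sum_insert hx]
    exact le_trans (pNorm_add_le hp1 _ _) (by linarith [ih])


/-- sign function -/
def sg (b : Bool) : ℂ := if b then 1 else -1

lemma sg_norm (b : Bool) : ‖sg b‖ = 1 := by cases b <;> simp [sg]

lemma prod_comp_count (f : Fin m → Fin m) (g : Fin m → ℂ) :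
    ∏ u : Fin m, g (f u) =
      ∏ k : Fin m, g k ^ (Finset.univ.filter (fun u => f u = k)).card := by
  classical
  rw [← Finset.prod_fiberwise' Finset.univ f g]
  exact Finset.prod_congr rfl fun k _ => Finset.prod_const (g k)

lemma sum_bool_sg_pow (c : ℕ) :
    (∑ b : Bool, sg b ^ (c + 1)) = if Odd c then 2 else 0 := by
  rw [Fintype.sum_bool]
  simp only [sg, if_pos, if_neg]
  norm_num
  by_cases hc : Odd c
  · have : Even (c + 1) := Odd.add_one hc
    rw [if_pos hc, this.neg_one_pow]; norm_num
  · have : Odd (c + 1) := Even.add_one (Nat.not_odd_iff_even.mp hc)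
    rw [if_neg hc, this.neg_one_pow]; norm_num

lemma W_eq (f : Fin m → Fin m) :
    (∑ ε : Fin m → Bool, (∏ k : Fin m, sg (ε k)) * ∏ u : Fin m, sg (ε (f u)))
      = if Function.Bijective f then (2 : ℂ) ^ m else 0 := by
  classical
  have h1 : ∀ ε : Fin m → Bool, (∏ k : Fin m, sg (ε k)) * ∏ u : Fin m, sg (ε (f u)) =
      ∏ k : Fin m, sg (ε k) ^ ((Finset.univ.filter (fun u => f u = k)).card + 1) := by
    intro ε
    rw [prod_comp_count f (fun k => sg (ε k)), ← Finset.prod_mul_distrib]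
    exact Finset.prod_congr rfl fun k _ => by rw [pow_succ, mul_comm]
  have h2 : (∑ ε : Fin m → Bool, ∏ k : Fin m,
        sg (ε k) ^ ((Finset.univ.filter (fun u => f u = k)).card + 1)) =
      ∏ k : Fin m, ∑ b : Bool, sg b ^ ((Finset.univ.filter (fun u => f u = k)).card + 1) := by
    rw [Finset.prod_univ_sum]
    rw [← Fintype.piFinset_univ]
  rw [Finset.sum_congr rfl fun ε _ => h1 ε, h2]
  by_cases hf : Function.Bijective f
  · rw [if_pos hf]
    have hcard : ∀ k : Fin m, (Finset.univ.filter (fun u => f u = k)).card = 1 := by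
      intro k
      obtain ⟨u₀, hu₀, hun⟩ := hf.existsUnique k
      rw [Finset.card_eq_one]
      exact ⟨u₀, by
        ext u
        simp only [Finset.mem_filter, Finset.mem_univ, true_and, Finset.mem_singleton]
        exact ⟨fun h => hun u h, fun h => h ▸ hu₀⟩⟩
    calc (∏ k : Fin m, ∑ b : Bool, sg b ^ ((Finset.univ.filter (fun u => f u = k)).card + 1))
        = ∏ _k : Fin m, (2:ℂ) := Finset.prod_congr rfl fun k _ => by
          rw [hcard k, sum_bool_sg_pow]; norm_num
      _ = 2 ^ m := by rw [Finset.prod_const, Finset.card_univ, Fintype.card_fin]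
  · rw [if_neg hf]
    have hsurj : ¬ Function.Surjective f := by
      intro hs
      exact hf (Finite.surjective_iff_bijective.mp hs)
    unfold Function.Surjective at hsurj
    obtain ⟨k, hk⟩ := not_forall.mp hsurj
    push_neg at hk
    refine Finset.prod_eq_zero (Finset.mem_univ k) ?_
    have : (Finset.univ.filter (fun u => f u = k)).card = 0 := by
      rw [Finset.card_eq_zero]
      ext u
      simp only [Finset.mem_filter, Finset.mem_univ, true_and, Finset.notMem_empty,
        iff_false]
      exact hk u
    rw [this, sum_bool_sg_pow]
    norm_num

lemma polar_identity {A : (Fin m → Fin n) → ℂ}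
    (hA : ∀ (σ : Equiv.Perm (Fin m)) (j : Fin m → Fin n), A (j ∘ σ) = A j)
    (x : Fin m → (Fin n → ℂ)) :
    (∑ ε : Fin m → Bool, (∏ k : Fin m, sg (ε k)) *
        LP n m A (fun _ => fun i => ∑ k : Fin m, sg (ε k) * x k i))
      = (2 : ℂ) ^ m * (m.factorial : ℂ) * LP n m A x := by
  classical
  have step1 : ∀ ε : Fin m → Bool,
      LP n m A (fun _ => fun i => ∑ k : Fin m, sg (ε k) * x k i) =
      ∑ f : Fin m → Fin m, (∏ u : Fin m, sg (ε (f u))) * LP n m A (x ∘ f) := by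
    intro ε
    have hexp : ∀ j : Fin m → Fin n,
        (∏ u : Fin m, ∑ k : Fin m, sg (ε k) * x k (j u)) =
        ∑ f : Fin m → Fin m, (∏ u : Fin m, sg (ε (f u))) * ∏ u : Fin m, x (f u) (j u) := by
      intro j
      rw [Finset.prod_univ_sum, ← Fintype.piFinset_univ]
      exact Finset.sum_congr rfl fun f _ => Finset.prod_mul_distrib
    calc LP n m A (fun _ => fun i => ∑ k : Fin m, sg (ε k) * x k i)
        = ∑ j : Fin m → Fin n, A j *
            ∑ f : Fin m → Fin m, (∏ u : Fin m, sg (ε (f u))) * ∏ u : Fin m, x (f u) (j u) := by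
          rw [LP]
          exact Finset.sum_congr rfl fun j _ => by rw [hexp j]
      _ = ∑ j : Fin m → Fin n, ∑ f : Fin m → Fin m,
            (∏ u : Fin m, sg (ε (f u))) * (A j * ∏ u : Fin m, x (f u) (j u)) := by
          refine Finset.sum_congr rfl fun j _ => ?_
          rw [Finset.mul_sum]
          exact Finset.sum_congr rfl fun f _ => by ring
      _ = ∑ f : Fin m → Fin m, (∏ u : Fin m, sg (ε (f u))) * LP n m A (x ∘ f) := by
          rw [Finset.sum_comm]
          refine Finset.sum_congr rfl fun f _ => ?_
          rw [LP, Finset.mul_sum]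
          exact Finset.sum_congr rfl fun j _ => rfl
  calc (∑ ε : Fin m → Bool, (∏ k : Fin m, sg (ε k)) *
        LP n m A (fun _ => fun i => ∑ k : Fin m, sg (ε k) * x k i))
      = ∑ ε : Fin m → Bool, ∑ f : Fin m → Fin m,
          ((∏ k : Fin m, sg (ε k)) * ∏ u : Fin m, sg (ε (f u))) * LP n m A (x ∘ f) := by
        refine Finset.sum_congr rfl fun ε _ => ?_
        rw [step1 ε, Finset.mul_sum]
        exact Finset.sum_congr rfl fun f _ => by ring
    _ = ∑ f : Fin m → Fin m,
          (∑ ε : Fin m → Bool, (∏ k : Fin m, sg (ε k)) * ∏ u : Fin m, sg (ε (f u)))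
            * LP n m A (x ∘ f) := by
        rw [Finset.sum_comm]
        exact Finset.sum_congr rfl fun f _ => (Finset.sum_mul _ _ _).symm
    _ = ∑ f : Fin m → Fin m,
          (if Function.Bijective f then (2:ℂ)^m * LP n m A (x ∘ f) else 0) := by
        refine Finset.sum_congr rfl fun f _ => ?_
        rw [W_eq f, ite_mul, zero_mul]
    _ = ∑ f ∈ Finset.univ.filter (fun f : Fin m → Fin m => Function.Bijective f),
          (2:ℂ)^m * LP n m A (x ∘ f) := (Finset.sum_filter _ _).symm
    _ = ∑ _σ : Equiv.Perm (Fin m), (2:ℂ)^m * LP n m A x := by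
        refine Finset.sum_bij'
          (fun f hf => Equiv.ofBijective f (Finset.mem_filter.mp hf).2)
          (fun σ _ => ⇑σ) ?_ ?_ ?_ ?_ ?_
        · intro f hf; exact Finset.mem_univ _
        · intro σ _
          refine Finset.mem_filter.mpr ⟨Finset.mem_univ _, σ.bijective⟩
        · intro f hf; rfl
        · intro σ _; exact Equiv.ext fun a => rfl
        · intro f hf
          have hxf : x ∘ f = x ∘ ⇑(Equiv.ofBijective f (Finset.mem_filter.mp hf).2) := rfl
          rw [hxf, LP_comp_perm hA]
    _ = (2 : ℂ) ^ m * (m.factorial : ℂ) * LP n m A x := by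
        rw [Finset.sum_const, Finset.card_univ, Fintype.card_perm, Fintype.card_fin,
          nsmul_eq_mul]
        ring

/-- number of permutations realizing the sorted rearrangement -/
def stab (j : Fin m → Fin n) : ℕ :=
  (Finset.univ.filter
    (fun σ : Equiv.Perm (Fin m) => j ∘ ⇑σ = j ∘ ⇑(Tuple.sort j))).card

/-- symmetrization of the coefficients -/
noncomputable def Asym (cf : (Fin m → Fin n) → ℂ) : (Fin m → Fin n) → ℂ :=
  fun j => cf (j ∘ ⇑(Tuple.sort j)) * (stab j : ℂ) / (m.factorial : ℂ)

lemma sort_self {j : Fin m → Fin n} (hj : Monotone j) : j ∘ ⇑(Tuple.sort j) = j := by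
  rw [Tuple.sort_eq_refl_iff_monotone.mpr hj]
  rfl

lemma stab_comp_perm (j : Fin m → Fin n) (σ : Equiv.Perm (Fin m)) :
    stab (j ∘ ⇑σ) = stab j := by
  unfold stab
  have hcomp : ∀ (τ ρ : Equiv.Perm (Fin m)) (g : Fin m → Fin n),
      (g ∘ ⇑τ) ∘ ⇑ρ = g ∘ ⇑(τ * ρ) := fun _ _ _ => rfl
  have h1 : (j ∘ ⇑σ) ∘ ⇑(Tuple.sort (j ∘ ⇑σ)) = j ∘ ⇑(Tuple.sort j) :=
    Tuple.comp_perm_comp_sort_eq_comp_sort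
  simp only [h1]
  refine Finset.card_bij' (fun τ _ => σ * τ) (fun ρ _ => σ⁻¹ * ρ) ?_ ?_ ?_ ?_
  · intro τ hτ
    have hτ' := (Finset.mem_filter.mp hτ).2
    refine Finset.mem_filter.mpr ⟨Finset.mem_univ _, ?_⟩
    rw [← hcomp σ τ j]
    exact hτ'
  · intro ρ hρ
    have hρ' := (Finset.mem_filter.mp hρ).2
    refine Finset.mem_filter.mpr ⟨Finset.mem_univ _, ?_⟩
    rw [hcomp σ (σ⁻¹ * ρ) j, ← mul_assoc, mul_inv_cancel, one_mul]
    exact hρ'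
  · intro τ _; exact inv_mul_cancel_left σ τ
  · intro ρ _; exact mul_inv_cancel_left σ ρ

lemma Asym_symm (cf : (Fin m → Fin n) → ℂ) (σ : Equiv.Perm (Fin m)) (j : Fin m → Fin n) :
    Asym cf (j ∘ ⇑σ) = Asym cf j := by
  unfold Asym
  rw [stab_comp_perm j σ, Tuple.comp_perm_comp_sort_eq_comp_sort]

lemma sum_stab {i : Fin m → Fin n} (hi : Monotone i) :
    (∑ j ∈ Finset.univ.filter
        (fun j : Fin m → Fin n => j ∘ ⇑(Tuple.sort j) = i), stab j)
      = m.factorial := by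
  classical
  have hstep : ∀ j ∈ Finset.univ.filter
      (fun j : Fin m → Fin n => j ∘ ⇑(Tuple.sort j) = i),
      stab j = (Finset.univ.filter
        (fun σ : Equiv.Perm (Fin m) => j ∘ ⇑σ = i)).card := by
    intro j hj
    have hj' := (Finset.mem_filter.mp hj).2
    unfold stab
    rw [hj']
  rw [Finset.sum_congr rfl hstep]
  have hswap : (∑ j ∈ Finset.univ.filter
        (fun j : Fin m → Fin n => j ∘ ⇑(Tuple.sort j) = i),
      (Finset.univ.filter (fun σ : Equiv.Perm (Fin m) => j ∘ ⇑σ = i)).card)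
      = ∑ σ : Equiv.Perm (Fin m), ∑ j ∈ Finset.univ.filter
          (fun j : Fin m → Fin n => j ∘ ⇑(Tuple.sort j) = i),
          (if j ∘ ⇑σ = i then 1 else 0) := by
    rw [Finset.sum_comm]
    exact Finset.sum_congr rfl fun j _ => by rw [Finset.card_filter]
  rw [hswap]
  have hinner : ∀ σ : Equiv.Perm (Fin m),
      (∑ j ∈ Finset.univ.filter
          (fun j : Fin m → Fin n => j ∘ ⇑(Tuple.sort j) = i),
          (if j ∘ ⇑σ = i then 1 else 0)) = 1 := by
    intro σ
    rw [← Finset.sum_filter, Finset.filter_filter]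
    have hset : (Finset.univ.filter
        (fun j : Fin m → Fin n => j ∘ ⇑(Tuple.sort j) = i ∧ j ∘ ⇑σ = i))
        = {i ∘ ⇑σ⁻¹} := by
      ext j
      simp only [Finset.mem_filter, Finset.mem_univ, true_and, Finset.mem_singleton]
      constructor
      · rintro ⟨-, h2⟩
        funext a
        have : j (σ (σ⁻¹ a)) = i (σ⁻¹ a) := congrFun h2 (σ⁻¹ a)
        simpa using this
      · rintro rfl
        constructor
        · have h3 : (i ∘ ⇑σ⁻¹) ∘ ⇑(Tuple.sort (i ∘ ⇑σ⁻¹)) = i ∘ ⇑(Tuple.sort i) :=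
            Tuple.comp_perm_comp_sort_eq_comp_sort
          rw [h3, sort_self hi]
        · funext a; simp
    rw [hset, Finset.sum_singleton]
  rw [Finset.sum_congr rfl fun σ _ => hinner σ, Finset.sum_const, Finset.card_univ,
    Fintype.card_perm, Fintype.card_fin, smul_eq_mul, mul_one]

lemma LP_diag_eq {cf : (Fin m → Fin n) → ℂ}
    (hcf : ∀ j : Fin m → Fin n, ¬ Monotone j → cf j = 0) (y : Fin n → ℂ) :
    LP n m (Asym cf) (fun _ => y) = LP n m cf (fun _ => y) := by
  classical
  have hprod : ∀ j : Fin m → Fin n,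
      (∏ u : Fin m, y (j u)) = ∏ u : Fin m, y ((j ∘ ⇑(Tuple.sort j)) u) := by
    intro j
    exact (Equiv.prod_comp (Tuple.sort j) (fun u => y (j u))).symm
  have hL : LP n m (Asym cf) (fun _ => y)
      = ∑ j : Fin m → Fin n, (stab j : ℂ) *
          (cf (j ∘ ⇑(Tuple.sort j)) * ∏ u : Fin m, y ((j ∘ ⇑(Tuple.sort j)) u))
          / (m.factorial : ℂ) := by
    rw [LP]
    refine Finset.sum_congr rfl fun j _ => ?_
    rw [Asym, ← hprod j]
    ring
  rw [hL]
  rw [← Finset.sum_fiberwise Finset.univ (fun j : Fin m → Fin n => j ∘ ⇑(Tuple.sort j))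
    (fun j => (stab j : ℂ) *
      (cf (j ∘ ⇑(Tuple.sort j)) * ∏ u : Fin m, y ((j ∘ ⇑(Tuple.sort j)) u))
      / (m.factorial : ℂ))]
  have hmain : ∀ i : Fin m → Fin n,
      (∑ j ∈ Finset.univ.filter
          (fun j : Fin m → Fin n => j ∘ ⇑(Tuple.sort j) = i),
        (stab j : ℂ) *
          (cf (j ∘ ⇑(Tuple.sort j)) * ∏ u : Fin m, y ((j ∘ ⇑(Tuple.sort j)) u))
          / (m.factorial : ℂ))
      = cf i * ∏ u : Fin m, y (i u) := by
    intro i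
    have hcongr : ∀ j ∈ Finset.univ.filter
        (fun j : Fin m → Fin n => j ∘ ⇑(Tuple.sort j) = i),
        (stab j : ℂ) *
          (cf (j ∘ ⇑(Tuple.sort j)) * ∏ u : Fin m, y ((j ∘ ⇑(Tuple.sort j)) u))
          / (m.factorial : ℂ)
        = (stab j : ℂ) * (cf i * ∏ u : Fin m, y (i u)) / (m.factorial : ℂ) := by
      intro j hj
      rw [(Finset.mem_filter.mp hj).2]
    rw [Finset.sum_congr rfl hcongr, ← Finset.sum_div, ← Finset.sum_mul]
    by_cases hi : Monotone i
    · rw [← Nat.cast_sum, sum_stab hi]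
      exact mul_div_cancel_left₀ _ (Nat.cast_ne_zero.mpr (Nat.factorial_pos m).ne')
    · rw [hcf i hi]
      simp
  rw [Finset.sum_congr rfl fun i _ => hmain i, LP]

section Pattern

variable {μ : ℕ}

/-- set of consecutive equalities of a tuple -/
def EqS (j : Fin (μ+1) → Fin n) : Finset (Fin μ) :=
  Finset.univ.filter (fun t : Fin μ => j t.castSucc = j t.succ)

/-- `a` and `b` lie in the same block determined by `S` -/
def relS (S : Finset (Fin μ)) (a b : Fin (μ+1)) : Prop :=
  ∀ t : Fin μ, min a b ≤ t.castSucc → t.succ ≤ max a b → t ∈ S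

lemma chain_eq {j : Fin (μ+1) → Fin n} (hj : Monotone j) :
    ∀ (k : ℕ) (a b : Fin (μ+1)), a ≤ b → b.val = a.val + k →
      (∀ t : Fin μ, a ≤ t.castSucc → t.succ ≤ b → j t.castSucc = j t.succ) →
      j a = j b := by
  intro k
  induction k with
  | zero =>
    intro a b _ hval _
    have : a = b := Fin.ext (by omega)
    rw [this]
  | succ k ih =>
    intro a b hab hval h
    have haμ : a.val < μ := by
      have hb := b.isLt
      omega
    set t : Fin μ := ⟨a.val, haμ⟩ with ht
    have htv : (t : ℕ) = a.val := rfl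
    have hcast : t.castSucc = a := by
      apply Fin.ext
      simp [ht]
    have hstep : j a = j t.succ := by
      rw [← hcast]
      refine h t (le_of_eq hcast.symm) ?_
      rw [Fin.le_def]
      simp only [Fin.val_succ]
      omega
    have hsucc_le : t.succ ≤ b := by
      rw [Fin.le_def]
      simp only [Fin.val_succ]
      omega
    have hrest : j t.succ = j b := by
      refine ih t.succ b hsucc_le (by simp only [Fin.val_succ]; omega) ?_
      intro t' h1 h2
      refine h t' (le_trans ?_ h1) h2
      rw [Fin.le_def]
      simp only [Fin.val_succ]
      omega
    rw [hstep, hrest]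

lemma levelset_le {j : Fin (μ+1) → Fin n} (hj : Monotone j) {a b : Fin (μ+1)}
    (hab : a ≤ b) :
    j a = j b ↔ (∀ t : Fin μ, a ≤ t.castSucc → t.succ ≤ b → t ∈ EqS j) := by
  constructor
  · intro h t h1 h2
    refine Finset.mem_filter.mpr ⟨Finset.mem_univ _, ?_⟩
    have hcs : t.castSucc ≤ t.succ := by
      rw [Fin.le_def]; simp only [Fin.coe_castSucc, Fin.val_succ]; omega
    refine le_antisymm (hj hcs) ?_
    calc j t.succ ≤ j b := hj h2
      _ = j a := h.symm
      _ ≤ j t.castSucc := hj h1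
  · intro H
    refine chain_eq hj (b.val - a.val) a b hab (by omega) ?_
    intro t h1 h2
    exact (Finset.mem_filter.mp (H t h1 h2)).2

lemma levelset {j : Fin (μ+1) → Fin n} (hj : Monotone j) (a b : Fin (μ+1)) :
    j a = j b ↔ relS (EqS j) a b := by
  rcases le_total a b with hab | hab
  · rw [levelset_le hj hab, relS]
    rw [min_eq_left hab, max_eq_right hab]
  · rw [eq_comm, levelset_le hj hab, relS]
    rw [min_eq_right hab, max_eq_left hab]

open Classical in
/-- number of block-preserving permutations determined by the pattern `S` -/
noncomputable def stS (S : Finset (Fin μ)) : ℕ :=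
  (Finset.univ.filter
    (fun σ : Equiv.Perm (Fin (μ+1)) => ∀ a, relS S a (σ a))).card

lemma stab_eq_stS {j : Fin (μ+1) → Fin n} (hj : Monotone j) : stab j = stS (EqS j) := by
  classical
  unfold stab stS
  have hs : j ∘ ⇑(Tuple.sort j) = j := sort_self hj
  refine Finset.card_bij' (fun σ _ => σ) (fun σ _ => σ) ?_ ?_ ?_ ?_
  · intro σ hσ
    have hσ' := (Finset.mem_filter.mp hσ).2
    rw [hs] at hσ'
    refine Finset.mem_filter.mpr ⟨Finset.mem_univ _, fun a => ?_⟩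
    rw [← levelset hj a (σ a)]
    exact (congrFun hσ' a).symm
  · intro σ hσ
    have hσ' := (Finset.mem_filter.mp hσ).2
    refine Finset.mem_filter.mpr ⟨Finset.mem_univ _, ?_⟩
    rw [hs]
    funext a
    exact ((levelset hj a (σ a)).mpr (hσ' a)).symm
  · intro σ _; rfl
  · intro σ _; rfl

lemma relS_refl (S : Finset (Fin μ)) (a : Fin (μ+1)) : relS S a a := by
  intro t h1 h2
  exfalso
  rw [min_self] at h1
  rw [max_self] at h2
  have : t.castSucc < t.succ := Fin.castSucc_lt_succ (i := t)
  exact absurd (le_trans h2 h1) (not_le.mpr this)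

lemma stS_pos (S : Finset (Fin μ)) : 0 < stS S := by
  classical
  rw [stS]
  refine Finset.card_pos.mpr ⟨1, ?_⟩
  refine Finset.mem_filter.mpr ⟨Finset.mem_univ _, fun a => ?_⟩
  simp only [Equiv.Perm.coe_one, id_eq]
  exact relS_refl S a

lemma stS_le (S : Finset (Fin μ)) : stS S ≤ (μ+1).factorial := by
  classical
  calc stS S ≤ (Finset.univ : Finset (Equiv.Perm (Fin (μ+1)))).card :=
        Finset.card_filter_le _ _
    _ = (μ+1).factorial := by
        rw [Finset.card_univ, Fintype.card_perm, Fintype.card_fin]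

/-- weight of a pattern -/
noncomputable def wS (S : Finset (Fin μ)) : ℝ := ((μ+1).factorial : ℝ) / stS S

lemma wS_pos (S : Finset (Fin μ)) : 0 < wS S :=
  div_pos (by exact_mod_cast (μ+1).factorial_pos) (by exact_mod_cast stS_pos S)

lemma wS_le (S : Finset (Fin μ)) : wS S ≤ ((μ+1).factorial : ℝ) := by
  rw [wS, div_le_iff₀ (by exact_mod_cast stS_pos S)]
  nlinarith [stS_pos S, (μ+1).factorial_pos,
    (Nat.one_le_cast.mpr (stS_pos S) : (1:ℝ) ≤ stS S),
    (Nat.cast_pos.mpr (μ+1).factorial_pos : (0:ℝ) < ((μ+1).factorial : ℝ))]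

/-- Möbius coefficients -/
noncomputable def vS (F : Finset (Fin μ)) : ℝ :=
  ∑ E ∈ F.powerset, (-1 : ℝ) ^ (F.card - E.card) * wS E

lemma vS_abs_le (F : Finset (Fin μ)) : |vS F| ≤ (2:ℝ) ^ μ * ((μ+1).factorial : ℝ) := by
  refine le_trans (Finset.abs_sum_le_sum_abs _ _) ?_
  have h1 : ∀ E ∈ F.powerset, |(-1 : ℝ) ^ (F.card - E.card) * wS E|
      ≤ ((μ+1).factorial : ℝ) := by
    intro E _
    rw [abs_mul, abs_pow, abs_neg, abs_one, one_pow, one_mul,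
      abs_of_pos (wS_pos E)]
    exact wS_le E
  refine le_trans (Finset.sum_le_sum h1) ?_
  rw [Finset.sum_const, nsmul_eq_mul]
  refine mul_le_mul_of_nonneg_right ?_ (by positivity)
  rw [Finset.card_powerset]
  calc ((2 ^ F.card : ℕ) : ℝ) ≤ ((2 ^ μ : ℕ) : ℝ) := by
        exact_mod_cast Nat.pow_le_pow_right (by norm_num)
          (le_trans (Finset.card_le_univ F) (by simp))
    _ = (2:ℝ) ^ μ := by push_cast; ring

lemma sum_vS (S : Finset (Fin μ)) : ∑ F ∈ S.powerset, vS F = wS S := by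
  classical
  have hstepA : ∀ F ∈ S.powerset, vS F =
      ∑ E ∈ S.powerset, (if E ⊆ F then (-1 : ℝ) ^ (F.card - E.card) * wS E else 0) := by
    intro F hF
    have hFS := Finset.mem_powerset.mp hF
    rw [vS, ← Finset.sum_filter]
    refine Finset.sum_congr ?_ (fun _ _ => rfl)
    ext E
    simp only [Finset.mem_powerset, Finset.mem_filter]
    exact ⟨fun h => ⟨le_trans h hFS, h⟩, fun h => h.2⟩
  rw [Finset.sum_congr rfl hstepA, Finset.sum_comm]
  have hinner : ∀ E ∈ S.powerset,
      (∑ F ∈ S.powerset, if E ⊆ F then (-1 : ℝ) ^ (F.card - E.card) * wS E else 0)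
      = (if E = S then (1:ℝ) else 0) * wS E := by
    intro E hE
    have hES := Finset.mem_powerset.mp hE
    rw [← Finset.sum_filter]
    have hbij : (∑ F ∈ S.powerset.filter (fun F => E ⊆ F),
        (-1 : ℝ) ^ (F.card - E.card) * wS E)
        = ∑ G ∈ (S \ E).powerset, (-1 : ℝ) ^ G.card * wS E := by
      refine Finset.sum_bij' (fun F _ => F \ E) (fun G _ => E ∪ G) ?_ ?_ ?_ ?_ ?_
      · intro F hF
        have h1 := Finset.mem_powerset.mp (Finset.mem_filter.mp hF).1
        exact Finset.mem_powerset.mpr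
          (Finset.sdiff_subset_sdiff h1 (le_refl E))
      · intro G hG
        have h1 := Finset.mem_powerset.mp hG
        refine Finset.mem_filter.mpr ⟨Finset.mem_powerset.mpr ?_, Finset.subset_union_left⟩
        exact Finset.union_subset hES (le_trans h1 (Finset.sdiff_subset))
      · intro F hF
        exact Finset.union_sdiff_of_subset (Finset.mem_filter.mp hF).2
      · intro G hG
        have h1 := Finset.mem_powerset.mp hG
        refine Finset.union_sdiff_cancel_left ?_
        exact Finset.disjoint_sdiff.mono_right h1
      · intro F hF
        rw [Finset.card_sdiff_of_subset (Finset.mem_filter.mp hF).2]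
    rw [hbij, ← Finset.sum_mul]
    congr 1
    have hz := Finset.sum_powerset_neg_one_pow_card (x := S \ E)
    have hz' : (∑ G ∈ (S \ E).powerset, (-1 : ℝ) ^ G.card)
        = if S \ E = ∅ then 1 else 0 := by
      have := congrArg (fun z : ℤ => (z : ℝ)) hz
      push_cast at this
      convert this using 2 <;> norm_num
    rw [hz']
    have heq : S \ E = ∅ ↔ E = S := by
      rw [Finset.sdiff_eq_empty_iff_subset]
      exact ⟨fun h => (le_antisymm hES h).symm ▸ rfl, fun h => h ▸ le_refl S⟩
    by_cases h : E = S
    · rw [if_pos h, if_pos (heq.mpr h)]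
    · rw [if_neg h, if_neg (fun hc => h (heq.mp hc))]
  rw [Finset.sum_congr rfl hinner]
  have : ∀ E ∈ S.powerset, (if E = S then (1:ℝ) else 0) * wS E
      = if E = S then wS E else 0 := by
    intro E _
    split_ifs <;> ring
  rw [Finset.sum_congr rfl this, Finset.sum_ite_eq' S.powerset S wS,
    if_pos (Finset.mem_powerset.mpr (le_refl S))]

end Pattern

section Diag

/-- the sup of `|P|` over the unit ball, i.e. over diagonal evaluations -/
noncomputable def D (p : ℝ) (n m : ℕ) (c : (Fin m → Fin n) → ℂ) : ℝ :=
  ⨆ y : {y : Fin n → ℂ // pNorm n p y ≤ 1}, ‖LP n m c (fun _ => y.1)‖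

lemma le_D (hp1 : 1 ≤ p) {c : (Fin m → Fin n) → ℂ} {y : Fin n → ℂ}
    (hy : pNorm n p y ≤ 1) : ‖LP n m c (fun _ => y)‖ ≤ D p n m c := by
  have hbdd : BddAbove (Set.range fun y : {y : Fin n → ℂ // pNorm n p y ≤ 1} =>
      ‖LP n m c (fun _ => y.1)‖) := by
    refine ⟨∑ j : Fin m → Fin n, ‖c j‖, ?_⟩
    rintro r ⟨z, rfl⟩
    exact LP_le_sum_norm fun u i => coord_le_one hp1 z.2 i
  exact le_ciSup hbdd ⟨y, hy⟩

lemma D_nonneg (hp1 : 1 ≤ p) (c : (Fin m → Fin n) → ℂ) : 0 ≤ D p n m c := by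
  refine le_trans (norm_nonneg (LP n m c (fun _ => fun _ => 0))) ?_
  exact le_D hp1 (by rw [pNorm_zero (lt_of_lt_of_le one_pos hp1)]; norm_num)

lemma S_Asym_le (hp1 : 1 ≤ p) (hm : 0 < m) {cf : (Fin m → Fin n) → ℂ}
    (hcf : ∀ j : Fin m → Fin n, ¬ Monotone j → cf j = 0) :
    S p n m (Asym cf) ≤ ((m:ℝ)^m / (m.factorial : ℝ)) * D p n m cf := by
  have hp0 : 0 < p := lt_of_lt_of_le one_pos hp1
  refine S_le hp1 fun x hx => ?_
  have hpolar := polar_identity (A := Asym cf) (Asym_symm cf) x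
  have hnorm_eq : (2:ℝ)^m * (m.factorial : ℝ) * ‖LP n m (Asym cf) x‖
      = ‖∑ ε : Fin m → Bool, (∏ k : Fin m, sg (ε k)) *
          LP n m (Asym cf) (fun _ => fun i => ∑ k : Fin m, sg (ε k) * x k i)‖ := by
    rw [hpolar, norm_mul, norm_mul, norm_pow]
    simp [Complex.norm_natCast]
  have hterm : ∀ ε : Fin m → Bool,
      ‖(∏ k : Fin m, sg (ε k)) *
          LP n m (Asym cf) (fun _ => fun i => ∑ k : Fin m, sg (ε k) * x k i)‖
        ≤ (m:ℝ)^m * D p n m cf := by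
    intro ε
    rw [norm_mul, norm_prod]
    have h1 : (∏ k : Fin m, ‖sg (ε k)‖) = 1 :=
      Finset.prod_eq_one fun k _ => sg_norm (ε k)
    rw [h1, one_mul]
    set y : Fin n → ℂ := fun i => ∑ k : Fin m, sg (ε k) * x k i with hy
    have hynorm : pNorm n p y ≤ (m : ℝ) := by
      refine le_trans (pNorm_sum_le hp1 Finset.univ (fun k => fun i => sg (ε k) * x k i)) ?_
      have : ∀ k : Fin m, pNorm n p (fun i => sg (ε k) * x k i) ≤ 1 := by
        intro k
        rw [pNorm_smul hp0, sg_norm, one_mul]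
        exact hx k
      refine le_trans (Finset.sum_le_sum fun k _ => this k) ?_
      rw [Finset.sum_const, Finset.card_univ, Fintype.card_fin, nsmul_eq_mul, mul_one]
    set z : Fin n → ℂ := fun i => (1/(m:ℂ)) * y i with hz
    have hmne : ((m:ℂ)) ≠ 0 := Nat.cast_ne_zero.mpr hm.ne'
    have hyz : (fun _ : Fin m => y) = (fun _ : Fin m => fun i => (m:ℂ) * z i) := by
      funext u i
      rw [hz]
      field_simp
    have hzball : pNorm n p z ≤ 1 := by
      rw [hz, pNorm_smul hp0]
      have : ‖(1/(m:ℂ))‖ = 1/(m:ℝ) := by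
        rw [norm_div, norm_one, Complex.norm_natCast]
      rw [this]
      rw [div_mul_eq_mul_div, one_mul, div_le_one (by exact_mod_cast hm)]
      exact hynorm
    calc ‖LP n m (Asym cf) (fun _ => y)‖
        = ‖(m:ℂ)^m * LP n m (Asym cf) (fun _ => z)‖ := by rw [hyz, LP_homog]
      _ = (m:ℝ)^m * ‖LP n m (Asym cf) (fun _ => z)‖ := by
          rw [norm_mul, norm_pow, Complex.norm_natCast]
      _ = (m:ℝ)^m * ‖LP n m cf (fun _ => z)‖ := by rw [LP_diag_eq hcf]
      _ ≤ (m:ℝ)^m * D p n m cf := by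
          refine mul_le_mul_of_nonneg_left (le_D hp1 hzball) (by positivity)
  have hsum : ‖∑ ε : Fin m → Bool, (∏ k : Fin m, sg (ε k)) *
        LP n m (Asym cf) (fun _ => fun i => ∑ k : Fin m, sg (ε k) * x k i)‖
      ≤ (2:ℝ)^m * ((m:ℝ)^m * D p n m cf) := by
    refine le_trans (norm_sum_le _ _) ?_
    refine le_trans (Finset.sum_le_sum fun ε _ => hterm ε) ?_
    rw [Finset.sum_const, Finset.card_univ, Fintype.card_fun, Fintype.card_bool,
      Fintype.card_fin, nsmul_eq_mul]
    push_cast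
    ring_nf
    exact le_refl _
  have hfinal : (2:ℝ)^m * (m.factorial : ℝ) * ‖LP n m (Asym cf) x‖
      ≤ (2:ℝ)^m * ((m:ℝ)^m * D p n m cf) := by
    rw [hnorm_eq]; exact hsum
  have h2pos : (0:ℝ) < (2:ℝ)^m := by positivity
  have hfac : (0:ℝ) < (m.factorial : ℝ) := by exact_mod_cast m.factorial_pos
  rw [div_mul_eq_mul_div, le_div_iff₀ hfac]
  nlinarith [hfinal, h2pos]

end Diag

section Decomp

variable {μ : ℕ}

/-- the list of triangle projections realizing the pattern `F` -/
noncomputable def LF (F : Finset (Fin μ)) : List (Fin (μ+1) × Fin (μ+1)) :=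
  ((List.finRange μ).map (fun t => (t.castSucc, t.succ))) ++
    (F.toList.map (fun t => (t.succ, t.castSucc)))

lemma LF_ne (F : Finset (Fin μ)) : ∀ e ∈ LF F, e.1 ≠ e.2 := by
  intro e he
  rcases List.mem_append.mp he with h | h
  · obtain ⟨t, -, rfl⟩ := List.mem_map.mp h
    exact (Fin.castSucc_lt_succ (i := t)).ne
  · obtain ⟨t, -, rfl⟩ := List.mem_map.mp h
    exact (Fin.castSucc_lt_succ (i := t)).ne'

lemma LF_length (F : Finset (Fin μ)) : (LF F).length = μ + F.card := by
  rw [LF, List.length_append, List.length_map, List.length_map,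
    List.length_finRange, Finset.length_toList]

lemma mulInd_LF (A : (Fin (μ+1) → Fin n) → ℂ) (F : Finset (Fin μ))
    (j : Fin (μ+1) → Fin n) :
    mulInd (LF F) A j = if Monotone j ∧ F ⊆ EqS j then A j else 0 := by
  unfold mulInd
  have hiff : (∀ e ∈ LF F, j e.1 ≤ j e.2) ↔ (Monotone j ∧ F ⊆ EqS j) := by
    constructor
    · intro h
      have hmono : Monotone j := by
        refine Fin.monotone_iff_le_succ.mpr fun t => ?_
        exact h (t.castSucc, t.succ) (List.mem_append_left _
          (List.mem_map.mpr ⟨t, List.mem_finRange t, rfl⟩))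
      refine ⟨hmono, fun t ht => ?_⟩
      have h2 : j t.succ ≤ j t.castSucc :=
        h (t.succ, t.castSucc) (List.mem_append_right _
          (List.mem_map.mpr ⟨t, (Finset.mem_toList).mpr ht, rfl⟩))
      refine Finset.mem_filter.mpr ⟨Finset.mem_univ _, ?_⟩
      exact le_antisymm (hmono (Fin.castSucc_lt_succ (i := t)).le) h2
    · rintro ⟨hmono, hsub⟩ e he
      rcases List.mem_append.mp he with h | h
      · obtain ⟨t, -, rfl⟩ := List.mem_map.mp h
        exact hmono (Fin.castSucc_lt_succ (i := t)).le
      · obtain ⟨t, htl, rfl⟩ := List.mem_map.mp h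
        have ht : t ∈ EqS j := hsub (Finset.mem_toList.mp htl)
        exact le_of_eq ((Finset.mem_filter.mp ht).2).symm
  by_cases h : Monotone j ∧ F ⊆ EqS j
  · rw [if_pos (hiff.mpr h), if_pos h]
  · rw [if_neg (fun hc => h (hiff.mp hc)), if_neg h]

lemma cf_decomp {cf : (Fin (μ+1) → Fin n) → ℂ}
    (hcf : ∀ j : Fin (μ+1) → Fin n, ¬ Monotone j → cf j = 0)
    (j : Fin (μ+1) → Fin n) :
    cf j = ∑ F : Finset (Fin μ), ((vS F : ℝ) : ℂ) * mulInd (LF F) (Asym cf) j := by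
  classical
  by_cases hj : Monotone j
  · have hterm : ∀ F : Finset (Fin μ),
        ((vS F : ℝ) : ℂ) * mulInd (LF F) (Asym cf) j
          = if F ⊆ EqS j then ((vS F : ℝ) : ℂ) * Asym cf j else 0 := by
      intro F
      rw [mulInd_LF]
      by_cases hF : F ⊆ EqS j
      · rw [if_pos ⟨hj, hF⟩, if_pos hF]
      · rw [if_neg (fun hc => hF hc.2), if_neg hF, mul_zero]
    rw [Finset.sum_congr rfl fun F _ => hterm F, ← Finset.sum_filter]
    have hfe : (Finset.univ.filter (fun F : Finset (Fin μ) => F ⊆ EqS j))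
        = (EqS j).powerset := by
      ext F
      simp [Finset.mem_powerset]
    rw [hfe, ← Finset.sum_mul]
    have hsum : (∑ F ∈ (EqS j).powerset, ((vS F : ℝ) : ℂ)) = ((wS (EqS j) : ℝ) : ℂ) := by
      rw [← Complex.ofReal_sum, sum_vS]
    rw [hsum]
    have hA : Asym cf j = cf j * (stS (EqS j) : ℂ) / ((μ+1).factorial : ℂ) := by
      rw [Asym, sort_self hj, stab_eq_stS hj]
    rw [hA, wS]
    have h1 : ((stS (EqS j) : ℝ) : ℂ) ≠ 0 := by
      exact_mod_cast (stS_pos (EqS j)).ne'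
    have h2 : (((μ+1).factorial : ℝ) : ℂ) ≠ 0 := by
      exact_mod_cast ((μ+1).factorial_pos).ne'
    push_cast
    push_cast at h1 h2
    field_simp
  · rw [hcf j hj]
    refine (Finset.sum_eq_zero fun F _ => ?_).symm
    rw [mulInd_LF, if_neg (fun hc => hj hc.1), mul_zero]

end Decomp

end BHAux

open BHAux in
/-- Given Bennett's theorem — the main triangle projection is a bounded Schur
multiplier on bilinear forms on `ℓ_pⁿ × ℓ_pⁿ`, uniformly in `n`, for `1 ≤ p < 2`,
with constant `c₃ = c₃(p)` — there is a constant `c₂ = c₂(p) ≥ 1` such that for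
every `m`-homogeneous polynomial `P` on `ℂⁿ`,
`sup_{‖x⁽ᵏ⁾‖_p≤1} |L_P(x⁽¹⁾,…,x⁽ᵐ⁾)| ≤ c₂^{m²} · sup_{‖x‖_p≤1} |P(x)|`,
independently of the dimension `n`. -/
theorem main_theorem_lp (p : ℝ) (hp1 : 1 ≤ p) (hp2 : p < 2) (c₃ : ℝ)
    (hBennett : ∀ (n : ℕ) (a : Fin n → Fin n → ℂ) (x y : Fin n → ℂ),
      pNorm n p x ≤ 1 → pNorm n p y ≤ 1 →
      ‖∑ i : Fin n, ∑ j : Fin n, (if i ≤ j then a i j else 0) * y i * x j‖ ≤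
        c₃ * ⨆ q : {q : (Fin n → ℂ) × (Fin n → ℂ) //
            pNorm n p q.1 ≤ 1 ∧ pNorm n p q.2 ≤ 1},
          ‖∑ i : Fin n, ∑ j : Fin n, a i j * q.1.2 i * q.1.1 j‖) :
    ∃ c₂ : ℝ, 1 ≤ c₂ ∧
      ∀ (n m : ℕ) (cf : (Fin m → Fin n) → ℂ),
        (∀ j : Fin m → Fin n, ¬ Monotone j → cf j = 0) →
        ∀ x : Fin m → (Fin n → ℂ), (∀ u, pNorm n p (x u) ≤ 1) →
          ‖LP n m cf x‖ ≤
            c₂ ^ (m ^ 2) *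
              ⨆ y : {y : Fin n → ℂ // pNorm n p y ≤ 1},
                ‖LP n m cf (fun _ => y.1)‖ := by
  classical
  have hp0 : 0 < p := lt_of_lt_of_le one_pos hp1
  -- first derive `1 ≤ c₃`
  have hone : pNorm 1 p (fun _ => (1:ℂ)) ≤ 1 := by
    rw [pNorm]
    simp [Real.one_rpow]
  have hB1 := hBennett 1 (fun _ _ => 1) (fun _ => 1) (fun _ => 1) hone hone
  have hlhs : ‖∑ i : Fin 1, ∑ j : Fin 1,
      (if i ≤ j then (fun _ _ => (1:ℂ)) i j else 0) * (fun _ => (1:ℂ)) i *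
        (fun _ => (1:ℂ)) j‖ = 1 := by
    simp
  rw [hlhs] at hB1
  have hqne : Nonempty {q : (Fin 1 → ℂ) × (Fin 1 → ℂ) //
      pNorm 1 p q.1 ≤ 1 ∧ pNorm 1 p q.2 ≤ 1} :=
    ⟨⟨(fun _ => 0, fun _ => 0), by
      constructor <;> · show pNorm 1 p (fun _ => 0) ≤ 1; rw [pNorm_zero hp0]; norm_num⟩⟩
  have hsle : (⨆ q : {q : (Fin 1 → ℂ) × (Fin 1 → ℂ) //
      pNorm 1 p q.1 ≤ 1 ∧ pNorm 1 p q.2 ≤ 1},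
      ‖∑ i : Fin 1, ∑ j : Fin 1, (fun _ _ => (1:ℂ)) i j * q.1.2 i * q.1.1 j‖) ≤ 1 := by
    refine ciSup_le fun q => ?_
    rw [Fin.sum_univ_one, Fin.sum_univ_one, one_mul, norm_mul]
    exact mul_le_one₀ (coord_le_one hp1 q.2.2 0) (norm_nonneg _) (coord_le_one hp1 q.2.1 0)
  have hsnn : (0:ℝ) ≤ ⨆ q : {q : (Fin 1 → ℂ) × (Fin 1 → ℂ) //
      pNorm 1 p q.1 ≤ 1 ∧ pNorm 1 p q.2 ≤ 1},
      ‖∑ i : Fin 1, ∑ j : Fin 1, (fun _ _ => (1:ℂ)) i j * q.1.2 i * q.1.1 j‖ :=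
    Real.iSup_nonneg fun q => norm_nonneg _
  have hc₃ : 1 ≤ c₃ := by
    have hc₃pos : 0 < c₃ := by nlinarith
    nlinarith [mul_le_mul_of_nonneg_left hsle hc₃pos.le]
  -- the constant
  refine ⟨8 * c₃ ^ 2, by nlinarith, ?_⟩
  intro n m cf hcf x hx
  match m with
  | 0 =>
    have h0 : LP n 0 cf x = LP n 0 cf (fun _ => fun _ => 0) := by
      rw [LP, LP]
      simp
    rw [h0]
    have := le_D (n := n) (m := 0) hp1 (c := cf)
      (y := fun _ => 0) (by rw [pNorm_zero hp0]; norm_num)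
    simpa [D] using this
  | Nat.succ μ =>
    set m := μ + 1 with hmdef
    have hm : 0 < m := Nat.succ_pos μ
    set A := Asym cf with hA
    set Dv := D p n m cf with hD
    have hDnn : 0 ≤ Dv := D_nonneg hp1 cf
    have hSA : S p n m A ≤ ((m:ℝ)^m / (m.factorial : ℝ)) * Dv := S_Asym_le hp1 hm hcf
    have hdecomp : cf = fun j => ∑ F : Finset (Fin μ), ((vS F : ℝ) : ℂ) *
        mulInd (LF F) A j := funext (cf_decomp hcf)
    have hsplit : LP n m cf x = ∑ F : Finset (Fin μ),
        ((vS F : ℝ) : ℂ) * LP n m (mulInd (LF F) A) x := by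
      conv_lhs => rw [hdecomp]
      rw [LP_sum]
      exact Finset.sum_congr rfl fun F _ => LP_smul _ _ _
    -- bound each term
    have hterm : ∀ F : Finset (Fin μ),
        ‖((vS F : ℝ) : ℂ) * LP n m (mulInd (LF F) A) x‖ ≤
          ((2:ℝ)^μ * (m.factorial : ℝ)) *
            (c₃ ^ (2*m) * (((m:ℝ)^m / (m.factorial : ℝ)) * Dv)) := by
      intro F
      rw [norm_mul, Complex.norm_real]
      have h1 : ‖LP n m (mulInd (LF F) A) x‖ ≤ S p n m (mulInd (LF F) A) := le_S hp1 hx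
      have h2 : S p n m (mulInd (LF F) A) ≤ c₃ ^ (LF F).length * S p n m A :=
        schur_iter hp1 hc₃ (hBennett n) (LF F) (LF_ne F) A
      have h3 : c₃ ^ (LF F).length ≤ c₃ ^ (2*m) := by
        refine pow_le_pow_right₀ hc₃ ?_
        rw [LF_length]
        have : F.card ≤ μ := le_trans (Finset.card_le_univ F) (by simp)
        omega
      have hSAnn : 0 ≤ S p n m A := S_nonneg hp1 A
      have h4 : ‖LP n m (mulInd (LF F) A) x‖ ≤
          c₃ ^ (2*m) * (((m:ℝ)^m / (m.factorial : ℝ)) * Dv) := by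
        refine le_trans h1 (le_trans h2 ?_)
        calc c₃ ^ (LF F).length * S p n m A
            ≤ c₃ ^ (2*m) * S p n m A := mul_le_mul_of_nonneg_right h3 hSAnn
          _ ≤ c₃ ^ (2*m) * (((m:ℝ)^m / (m.factorial : ℝ)) * Dv) := by
              refine mul_le_mul_of_nonneg_left hSA (by positivity)
      refine mul_le_mul (vS_abs_le F) h4 (norm_nonneg _) (by positivity)
    have hbound : ‖LP n m cf x‖ ≤ (2:ℝ)^μ * (((2:ℝ)^μ * (m.factorial : ℝ)) *
        (c₃ ^ (2*m) * (((m:ℝ)^m / (m.factorial : ℝ)) * Dv))) := by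
      rw [hsplit]
      refine le_trans (norm_sum_le _ _) ?_
      refine le_trans (Finset.sum_le_sum fun F _ => hterm F) ?_
      rw [Finset.sum_const, Finset.card_univ, Fintype.card_finset, Fintype.card_fin,
        nsmul_eq_mul]
      push_cast
      exact le_refl _
    -- numerics
    have hfacpos : (0:ℝ) < (m.factorial : ℝ) := by exact_mod_cast m.factorial_pos
    have hLHS_eq : (2:ℝ)^μ * (((2:ℝ)^μ * (m.factorial : ℝ)) *
        (c₃ ^ (2*m) * (((m:ℝ)^m / (m.factorial : ℝ)) * Dv)))
        = ((2:ℝ)^μ * ((2:ℝ)^μ * ((m:ℝ)^m * c₃ ^ (2*m)))) * Dv := by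
      field_simp
    have hmle : (m:ℝ) ≤ (2:ℝ)^m := by
      have := Nat.lt_two_pow_self (n := m)
      exact_mod_cast this.le
    have hA1 : (2:ℝ)^μ ≤ (2:ℝ)^(m^2) := by
      refine pow_le_pow_right₀ (by norm_num) ?_
      nlinarith [hm]
    have hA3 : (m:ℝ)^m ≤ (2:ℝ)^(m^2) := by
      calc (m:ℝ)^m ≤ ((2:ℝ)^m)^m := pow_le_pow_left₀ (by positivity) hmle m
        _ = (2:ℝ)^(m^2) := by rw [← pow_mul, sq]
    have hA4 : c₃ ^ (2*m) ≤ (c₃^2) ^ (m^2) := by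
      rw [← pow_mul]
      refine pow_le_pow_right₀ hc₃ ?_
      nlinarith [hm]
    have hc₃nn : (0:ℝ) ≤ c₃ := le_trans zero_le_one hc₃
    have hprod : (2:ℝ)^μ * ((2:ℝ)^μ * ((m:ℝ)^m * c₃ ^ (2*m)))
        ≤ (2:ℝ)^(m^2) * ((2:ℝ)^(m^2) * ((2:ℝ)^(m^2) * (c₃^2) ^ (m^2))) := by
      have hp1' : (0:ℝ) ≤ (2:ℝ)^μ := by positivity
      have hp2' : (0:ℝ) ≤ (m:ℝ)^m := by positivity
      have hp3' : (0:ℝ) ≤ c₃ ^ (2*m) := by positivity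
      have hi : (m:ℝ)^m * c₃ ^ (2*m) ≤ (2:ℝ)^(m^2) * (c₃^2) ^ (m^2) :=
        mul_le_mul hA3 hA4 hp3' (by positivity)
      have hj : (2:ℝ)^μ * ((m:ℝ)^m * c₃ ^ (2*m))
          ≤ (2:ℝ)^(m^2) * ((2:ℝ)^(m^2) * (c₃^2) ^ (m^2)) :=
        mul_le_mul hA1 hi (by positivity) (by positivity)
      exact mul_le_mul hA1 hj (by positivity) (by positivity)
    have hpw : (2:ℝ)^(m^2) * ((2:ℝ)^(m^2) * ((2:ℝ)^(m^2) * (c₃^2) ^ (m^2)))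
        = (8 * c₃^2) ^ (m^2) := by
      rw [show (8:ℝ) * c₃^2 = 2*(2*(2*c₃^2)) from by ring, mul_pow, mul_pow, mul_pow]
    refine le_trans hbound ?_
    rw [hLHS_eq]
    have : ((2:ℝ)^μ * ((2:ℝ)^μ * ((m:ℝ)^m * c₃ ^ (2*m)))) * Dv
        ≤ ((8 * c₃^2) ^ (m^2)) * Dv := by
      refine mul_le_mul_of_nonneg_right ?_ hDnn
      rw [← hpw]
      exact hprod
    exact this
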